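/- Strong consistency of ΔEx: let q be an SMM in difference representation, let p, f, w, I be as in the importance-sampling setup, and assume f·w is integrable with respect to q₊·μ and q₋·μ. On a probability space carrying an i.i.d. sequence (X₊^{(n)})_{n≥1} with law q₊·μ and an independent i.i.d. sequence (X₋^{(n)})_{n≥1} with law q₋·μ, almost surely the ΔEx estimator converges to I as both sample sizes tend to infinity: with probability one, (Z₊/Z_q)·(1/S₊)·Σ_{s=1}^{S₊} f(X₊^{(s)}) w(X₊^{(s)}) − (Z₋/Z_q)·(1/S₋)·Σ_{s=1}^{S₋} f(X₋^{(s)}) w(X₋^{(s)}) → I as S₊ → ∞ and S₋ → ∞. -/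

import Mathlib

open MeasureTheory ProbabilityTheory Filter
open scoped ENNReal NNReal Topology

/-- **Strong consistency of the ΔEx estimator.**
On a probability space carrying an i.i.d. sequence `(X₊ⁿ)` with law `q₊·μ` and an
independent i.i.d. sequence `(X₋ⁿ)` with law `q₋·μ` (all samples jointly independent),
the ΔEx estimator converges almost surely to `I = ∫ f p dμ` as both sample sizes tend
to infinity. -/
theorem deltaEx_strongly_consistent
    {X : Type*} [MeasurableSpace X] (μ : Measure X)
    (qp qm q : X → ℝ) (Zp Zm : ℝ)
    (hqp_meas : Measurable qp) (hqm_meas : Measurable qm)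
    (hqp_nonneg : ∀ x, 0 ≤ qp x) (hqm_nonneg : ∀ x, 0 ≤ qm x)
    (hqp_int : ∫ x, qp x ∂μ = 1) (hqm_int : ∫ x, qm x ∂μ = 1)
    (hZp : 0 < Zp) (hZm : 0 ≤ Zm) (hZq : 0 < Zp - Zm)
    (hq_def : ∀ x, q x = (Zp - Zm)⁻¹ * (Zp * qp x - Zm * qm x))
    (hq_nonneg : ∀ᵐ x ∂μ, 0 ≤ q x)
    (p f w : X → ℝ)
    (hp_meas : Measurable p) (hp_nonneg : ∀ x, 0 ≤ p x) (hp_int : ∫ x, p x ∂μ = 1)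
    (hf_meas : Measurable f)
    (hf_int : Integrable (fun x => |f x| * p x) μ)
    (habs : ∀ᵐ x ∂μ, q x = 0 → p x = 0)
    (hw_def : ∀ x, w x = if 0 < q x then p x / q x else 0)
    (hfw_qp : Integrable (fun x => f x * w x)
      (μ.withDensity fun x => ENNReal.ofReal (qp x)))
    (hfw_qm : Integrable (fun x => f x * w x)
      (μ.withDensity fun x => ENNReal.ofReal (qm x)))
    {Ω : Type*} [MeasurableSpace Ω] (P : Measure Ω) [IsProbabilityMeasure P]
    (Xplus Xminus : ℕ → Ω → X)
    (hXp_meas : ∀ n, Measurable (Xplus n)) (hXm_meas : ∀ n, Measurable (Xminus n))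
    (hXp_law : ∀ n, Measure.map (Xplus n) P
      = μ.withDensity fun x => ENNReal.ofReal (qp x))
    (hXm_law : ∀ n, Measure.map (Xminus n) P
      = μ.withDensity fun x => ENNReal.ofReal (qm x))
    (hindep : iIndepFun (Sum.elim Xplus Xminus) P) :
    ∀ᵐ ω ∂P, Tendsto
      (fun S : ℕ × ℕ =>
        (Zp / (Zp - Zm)) * (S.1 : ℝ)⁻¹
            * ∑ s ∈ Finset.range S.1, f (Xplus s ω) * w (Xplus s ω)
          - (Zm / (Zp - Zm)) * (S.2 : ℝ)⁻¹
            * ∑ s ∈ Finset.range S.2, f (Xminus s ω) * w (Xminus s ω))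
      atTop (nhds (∫ x, f x * p x ∂μ)) := by
  -- basic measurability
  have hq_meas : Measurable q := by
    have : q = fun x => (Zp - Zm)⁻¹ * (Zp * qp x - Zm * qm x) := funext hq_def
    rw [this]; fun_prop
  have hw_meas : Measurable w := by
    have : w = fun x => if 0 < q x then p x / q x else 0 := funext hw_def
    rw [this]
    exact Measurable.ite (measurableSet_lt measurable_const hq_meas)
      (hp_meas.div hq_meas) measurable_const
  set g : X → ℝ := fun x => f x * w x with hg
  have hg_meas : Measurable g := hf_meas.mul hw_meas
  set A : ℝ := ∫ x, g x ∂(μ.withDensity fun x => ENNReal.ofReal (qp x)) with hA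
  set B : ℝ := ∫ x, g x ∂(μ.withDensity fun x => ENNReal.ofReal (qm x)) with hB
  -- rewrite the withDensity integrals as integrals against μ
  have density_eq : ∀ (r : X → ℝ), (∀ x, 0 ≤ r x) → Measurable r →
      (μ.withDensity fun x => ENNReal.ofReal (r x))
        = μ.withDensity fun x => ((r x).toNNReal : ℝ≥0∞) := by
    intro r _ _; rfl
  have hA_eq : A = ∫ x, qp x * g x ∂μ := by
    rw [hA, density_eq qp hqp_nonneg hqp_meas,
      integral_withDensity_eq_integral_smul (by fun_prop : Measurable fun x => (qp x).toNNReal)]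
    refine integral_congr_ae (Filter.Eventually.of_forall fun x => ?_)
    simp [NNReal.smul_def, Real.coe_toNNReal _ (hqp_nonneg x)]
  have hB_eq : B = ∫ x, qm x * g x ∂μ := by
    rw [hB, density_eq qm hqm_nonneg hqm_meas,
      integral_withDensity_eq_integral_smul (by fun_prop : Measurable fun x => (qm x).toNNReal)]
    refine integral_congr_ae (Filter.Eventually.of_forall fun x => ?_)
    simp [NNReal.smul_def, Real.coe_toNNReal _ (hqm_nonneg x)]
  -- integrability against μ
  have hint_of : ∀ (r : X → ℝ), (∀ x, 0 ≤ r x) → Measurable r →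
      Integrable g (μ.withDensity fun x => ENNReal.ofReal (r x)) →
      Integrable (fun x => r x * g x) μ := by
    intro r hr hrm hint
    have h := (integrable_withDensity_iff (by fun_prop)
      (Filter.Eventually.of_forall fun x => ENNReal.ofReal_lt_top)).mp hint
    refine h.congr (Filter.Eventually.of_forall fun x => ?_)
    simp only [ENNReal.toReal_ofReal (hr x)]
    ring
  have hqpg_int : Integrable (fun x => qp x * g x) μ := hint_of qp hqp_nonneg hqp_meas hfw_qp
  have hqmg_int : Integrable (fun x => qm x * g x) μ := hint_of qm hqm_nonneg hqm_meas hfw_qm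
  -- the key identity:  (Zp/(Zp-Zm)) * A - (Zm/(Zp-Zm)) * B = ∫ f p dμ
  have hqg_ae : (fun x => q x * g x) =ᵐ[μ] fun x => f x * p x := by
    filter_upwards [hq_nonneg, habs] with x hx hx0
    rcases lt_or_eq_of_le hx with hpos | hzero
    · have hw : w x = p x / q x := by rw [hw_def]; simp [hpos]
      have hqne : q x ≠ 0 := ne_of_gt hpos
      simp only [hg, hw]
      field_simp
    · have hw : w x = 0 := by rw [hw_def]; simp [← hzero]
      simp [hg, hw, ← hzero, hx0 hzero.symm]
  have key : Zp / (Zp - Zm) * A - Zm / (Zp - Zm) * B = ∫ x, f x * p x ∂μ := by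
    have h1 : Zp / (Zp - Zm) * A - Zm / (Zp - Zm) * B
        = ∫ x, (Zp / (Zp - Zm) * (qp x * g x) - Zm / (Zp - Zm) * (qm x * g x)) ∂μ := by
      rw [integral_sub (hqpg_int.const_mul _) (hqmg_int.const_mul _),
        integral_const_mul, integral_const_mul, hA_eq, hB_eq]
    rw [h1]
    have h2 : ∀ x, Zp / (Zp - Zm) * (qp x * g x) - Zm / (Zp - Zm) * (qm x * g x)
        = q x * g x := by
      intro x
      rw [hq_def]
      have : (Zp - Zm) ≠ 0 := ne_of_gt hZq
      field_simp
    calc ∫ x, (Zp / (Zp - Zm) * (qp x * g x) - Zm / (Zp - Zm) * (qm x * g x)) ∂μ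
        = ∫ x, q x * g x ∂μ := by
          exact integral_congr_ae (Filter.Eventually.of_forall fun x => h2 x)
      _ = ∫ x, f x * p x ∂μ := integral_congr_ae hqg_ae
  -- strong law for each sequence
  have slln : ∀ (Y : ℕ → Ω → X), (∀ n, Measurable (Y n)) →
      (∀ n, Measure.map (Y n) P = Measure.map (Y 0) P) →
      Integrable g (Measure.map (Y 0) P) →
      (Pairwise fun i j => IndepFun (Y i) (Y j) P) →
      ∀ᵐ ω ∂P, Tendsto (fun n : ℕ => (∑ i ∈ Finset.range n, g (Y i ω)) / n) atTop
        (𝓝 (∫ x, g x ∂(Measure.map (Y 0) P))) := by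
    intro Y hYm hYlaw hYint hYindep
    have hint0 : Integrable (fun ω => g (Y 0 ω)) P := by
      have := (integrable_map_measure hg_meas.aestronglyMeasurable
        (hYm 0).aemeasurable).mp hYint
      exact this
    have hident : ∀ i, IdentDistrib (fun ω => g (Y i ω)) (fun ω => g (Y 0 ω)) P P := by
      intro i
      have hid : IdentDistrib (Y i) (Y 0) P P :=
        ⟨(hYm i).aemeasurable, (hYm 0).aemeasurable, hYlaw i⟩
      exact hid.comp hg_meas
    have hindep' : Pairwise (Function.onFun (fun a b => IndepFun a b P) fun i ω => g (Y i ω)) := by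
      intro i j hij
      exact (hYindep hij).comp hg_meas hg_meas
    have h := strong_law_ae_real (fun i ω => g (Y i ω)) hint0 hindep' hident
    have hmean : (∫ ω, g (Y 0 ω) ∂P) = ∫ x, g x ∂(Measure.map (Y 0) P) := by
      rw [integral_map (hYm 0).aemeasurable hg_meas.aestronglyMeasurable]
    filter_upwards [h] with ω hω
    rw [← hmean]
    exact hω
  have hpair_p : Pairwise fun i j => IndepFun (Xplus i) (Xplus j) P := by
    intro i j hij
    have := hindep.indepFun (i := Sum.inl i) (j := Sum.inl j) (by simpa using hij)
    simpa using this
  have hpair_m : Pairwise fun i j => IndepFun (Xminus i) (Xminus j) P := by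
    intro i j hij
    have := hindep.indepFun (i := Sum.inr i) (j := Sum.inr j) (by simpa using hij)
    simpa using this
  have hlawp : ∀ n, Measure.map (Xplus n) P = Measure.map (Xplus 0) P := by
    intro n; rw [hXp_law n, hXp_law 0]
  have hlawm : ∀ n, Measure.map (Xminus n) P = Measure.map (Xminus 0) P := by
    intro n; rw [hXm_law n, hXm_law 0]
  have hP := slln Xplus hXp_meas hlawp (by rw [hXp_law 0]; exact hfw_qp) hpair_p
  have hM := slln Xminus hXm_meas hlawm (by rw [hXm_law 0]; exact hfw_qm) hpair_m
  rw [hXp_law 0] at hP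
  rw [hXm_law 0] at hM
  filter_upwards [hP, hM] with ω hωp hωm
  -- combine the two limits over the product filter
  have hfst : Tendsto (fun S : ℕ × ℕ => S.1) (atTop : Filter (ℕ × ℕ)) atTop := by
    rw [← prod_atTop_atTop_eq]; exact tendsto_fst
  have hsnd : Tendsto (fun S : ℕ × ℕ => S.2) (atTop : Filter (ℕ × ℕ)) atTop := by
    rw [← prod_atTop_atTop_eq]; exact tendsto_snd
  have h1 : Tendsto (fun S : ℕ × ℕ =>
      Zp / (Zp - Zm) * ((∑ i ∈ Finset.range S.1, g (Xplus i ω)) / S.1)) atTop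
      (𝓝 (Zp / (Zp - Zm) * A)) := ((hωp.comp hfst).const_mul _)
  have h2 : Tendsto (fun S : ℕ × ℕ =>
      Zm / (Zp - Zm) * ((∑ i ∈ Finset.range S.2, g (Xminus i ω)) / S.2)) atTop
      (𝓝 (Zm / (Zp - Zm) * B)) := ((hωm.comp hsnd).const_mul _)
  have := h1.sub h2
  rw [key] at this
  refine this.congr (fun S => ?_)
  simp only [hg]
  ring
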